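/- arXiv:0711.3051 — 2 statements merged into one kernel-verified Lean document; each statement's English description precedes it below -/
import Mathlib

section
/- If f is a transcendental entire function with lower order μ(f) > 0 and finite order λ(f) < ∞, then for every m > 1 with m·μ(f) > λ(f), there is R > 0 such that log M(r^m, f) ≥ m² · log M(r, f) for all r ≥ R, where M(r,f) = max_{|z|=r} |f(z)|. -/
open Filter

/-- The maximum modulus `M(r,f) = max_{|z|=r} |f z|`. -/
noncomputable def maxMod (f : ℂ → ℂ) (r : ℝ) : ℝ :=
  sSup ((fun z => ‖f z‖) '' Metric.sphere (0:ℂ) r)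

/-- The function whose `limsup`/`liminf` at `∞` give the order/lower order of an
entire function: `log log M(r,f) / log r`. -/
noncomputable def entireOrderFun (f : ℂ → ℂ) (r : ℝ) : ℝ :=
  Real.log (Real.log (maxMod f r)) / Real.log r

-- max modulus: for |z0| ≤ r, |f z0| ≤ maxMod f r
lemma abs_le_maxMod (f : ℂ → ℂ) (hf : Differentiable ℂ f) (z0 : ℂ) (r : ℝ)
    (hr : 0 < r) (hz : ‖z0‖ ≤ r) : ‖f z0‖ ≤ maxMod f r := by
  have hbdd : BddAbove ((fun z => ‖f z‖) '' Metric.sphere (0:ℂ) r) :=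
    ((isCompact_sphere (0:ℂ) r).image (continuous_norm.comp hf.continuous)).bddAbove
  have key : ∀ z ∈ closure (Metric.ball (0:ℂ) r), ‖f z‖ ≤ maxMod f r := by
    intro z hz
    refine Complex.norm_le_of_forall_mem_frontier_norm_le Metric.isBounded_ball
      (hf.diffContOnCl) (fun w hw => ?_) hz
    rw [frontier_ball (0:ℂ) hr.ne'] at hw
    exact le_csSup hbdd ⟨w, hw, rfl⟩
  have : z0 ∈ closure (Metric.ball (0:ℂ) r) := by
    rw [closure_ball (0:ℂ) hr.ne']
    simpa [Complex.dist_eq] using hz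
  simpa using key z0 this

lemma exists_big (f : ℂ → ℂ) (hf : Differentiable ℂ f)
    (htrans : ¬ ∃ p : Polynomial ℂ, ∀ z, f z = p.eval z) :
    ∃ z0 : ℂ, 3 ≤ ‖f z0‖ := by
  by_contra h
  push_neg at h
  have hb : Bornology.IsBounded (Set.range f) := by
    rw [isBounded_iff_forall_norm_le]
    exact ⟨3, by rintro x ⟨z, rfl⟩; exact (h z).le⟩
  refine htrans ⟨Polynomial.C (f 0), fun z => ?_⟩
  rw [hf.apply_eq_apply_of_bounded hb z 0]
  simp

theorem stmt0 (f : ℂ → ℂ) (hf : Differentiable ℂ f)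
    (htrans : ¬ ∃ p : Polynomial ℂ, ∀ z, f z = p.eval z)
    (hfinite : IsBoundedUnder (· ≤ ·) atTop (entireOrderFun f))
    (hmu : 0 < liminf (entireOrderFun f) atTop) :
    ∀ m : ℝ, 1 < m →
      limsup (entireOrderFun f) atTop < m * liminf (entireOrderFun f) atTop →
      ∃ R > 0, ∀ r ≥ R,
        m ^ 2 * Real.log (maxMod f r) ≤ Real.log (maxMod f (r ^ m)) := by
  intro m hm hlt
  set u := entireOrderFun f with hu
  set l := liminf u atTop with hldef
  set L := limsup u atTop with hLdef
  obtain ⟨z0, hz0⟩ := exists_big f hf htrans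
  have hMbig : ∀ r : ℝ, 0 < r → ‖z0‖ ≤ r → 3 ≤ maxMod f r := fun r hr hzr =>
    le_trans hz0 (abs_le_maxMod f hf z0 r hr hzr)
  have hlog3 : ∀ x : ℝ, 3 ≤ x → 1 < Real.log x := by
    intro x hx
    have he : Real.exp 1 < 3 := by
      have := Real.exp_one_lt_d9; linarith
    calc 1 = Real.log (Real.exp 1) := (Real.log_exp 1).symm
      _ < Real.log x := Real.log_lt_log (Real.exp_pos 1) (by linarith)
  -- u is eventually nonnegative, hence bounded below
  have hnn : ∀ᶠ r in atTop, (0:ℝ) ≤ u r := by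
    filter_upwards [eventually_ge_atTop (max (‖z0‖) 2)] with r hr
    have hr2 : (2:ℝ) ≤ r := le_trans (le_max_right _ _) hr
    have hM := hMbig r (by linarith) (le_trans (le_max_left _ _) hr)
    exact div_nonneg (Real.log_nonneg (hlog3 _ hM).le) (Real.log_nonneg (by linarith))
  have hbelow : IsBoundedUnder (· ≥ ·) atTop u := ⟨0, hnn⟩
  -- choose ε, a, b
  have hml : 0 < m * l - L := by linarith
  set ε := min (l/2) ((m*l - L)/(2*(m+1))) with hεdef
  have hεpos : 0 < ε := lt_min (by linarith) (by positivity)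
  set a := l - ε with hadef
  set b := L + ε with hbdef
  have hε1 : ε ≤ l/2 := min_le_left _ _
  have hε2 : ε ≤ (m*l - L)/(2*(m+1)) := min_le_right _ _
  have ha : 0 < a := by simp only [hadef]; linarith
  have hδ : 0 < m*a - b := by
    have : ε * (2*(m+1)) ≤ m*l - L := (le_div_iff₀ (by linarith)).mp hε2
    simp only [hadef, hbdef]; nlinarith
  set δ := m*a - b with hδdef
  have hEa : ∀ᶠ r in atTop, a < u r :=
    eventually_lt_of_lt_liminf (by simp only [hadef, ← hldef]; linarith) hbelow
  have hEb : ∀ᶠ r in atTop, u r < b :=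
    eventually_lt_of_limsup_lt (by simp only [hbdef, ← hLdef]; linarith) hfinite
  obtain ⟨r0, hr0⟩ := eventually_atTop.mp (hEa.and hEb)
  set K := ((m^2 : ℝ)) ^ (δ⁻¹) with hKdef
  refine ⟨max (max r0 K) (max (‖z0‖) 2), lt_of_lt_of_le (by norm_num)
      (le_trans (le_max_right _ _) (le_max_right _ _)), ?_⟩
  intro r hr
  have hr2 : (2:ℝ) ≤ r := le_trans (le_trans (le_max_right _ _) (le_max_right _ _)) hr
  have hrpos : (0:ℝ) < r := by linarith
  have hr1 : (1:ℝ) ≤ r := by linarith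
  have hlogr : 0 < Real.log r := Real.log_pos (by linarith)
  have hrz0 : ‖z0‖ ≤ r := le_trans (le_trans (le_max_left _ _) (le_max_right _ _)) hr
  have hrr0 : r0 ≤ r := le_trans (le_trans (le_max_left _ _) (le_max_left _ _)) hr
  have hrK : K ≤ r := le_trans (le_trans (le_max_right _ _) (le_max_left _ _)) hr
  have hrm : r ≤ r ^ m := by
    calc r = r ^ (1:ℝ) := (Real.rpow_one r).symm
      _ ≤ r ^ m := Real.rpow_le_rpow_of_exponent_le hr1 hm.le
  have hrmpos : 0 < r ^ m := Real.rpow_pos_of_pos hrpos m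
  -- bounds on u at r and r^m
  obtain ⟨har, hbr⟩ := hr0 r hrr0
  obtain ⟨has, _⟩ := hr0 (r ^ m) (le_trans hrr0 hrm)
  -- maxMod sizes
  have hMr : 3 ≤ maxMod f r := hMbig r hrpos hrz0
  have hMs : 3 ≤ maxMod f (r ^ m) := hMbig _ hrmpos (le_trans hrz0 hrm)
  have hlogMr : 0 < Real.log (maxMod f r) := by linarith [hlog3 _ hMr]
  have hlogMs : 0 < Real.log (maxMod f (r ^ m)) := by linarith [hlog3 _ hMs]
  -- upper bound : log M r < r ^ b
  have hupper : Real.log (maxMod f r) < r ^ b := by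
    have h1 : Real.log (Real.log (maxMod f r)) < b * Real.log r := by
      have := (div_lt_iff₀ hlogr).mp hbr
      simpa [hu, entireOrderFun] using this
    have h2 := (Real.log_lt_iff_lt_exp hlogMr).mp h1
    rwa [Real.rpow_def_of_pos hrpos, mul_comm]
  -- lower bound : (r^m)^a = r^(m*a) < log M (r^m)
  have hlower : r ^ (m*a) < Real.log (maxMod f (r ^ m)) := by
    have hlogs : Real.log (r ^ m) = m * Real.log r := Real.log_rpow hrpos m
    have hlogspos : 0 < Real.log (r ^ m) := by rw [hlogs]; positivity
    have h1 : a * Real.log (r ^ m) < Real.log (Real.log (maxMod f (r ^ m))) := by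
      have := (lt_div_iff₀ hlogspos).mp (by simpa [hu, entireOrderFun] using has)
      exact this
    have h2 := (Real.lt_log_iff_exp_lt hlogMs).mp h1
    calc r ^ (m*a) = Real.exp (Real.log r * (m*a)) := Real.rpow_def_of_pos hrpos _
      _ = Real.exp (a * Real.log (r ^ m)) := by rw [hlogs]; ring_nf
      _ < _ := h2
  -- middle : m^2 * r^b ≤ r^(m*a)
  have hmid : m ^ 2 * r ^ b ≤ r ^ (m*a) := by
    have hm2pos : (0:ℝ) < m ^ 2 := by positivity
    have hKδ : K ^ δ = m ^ 2 := by
      rw [hKdef, ← Real.rpow_mul hm2pos.le, inv_mul_cancel₀ hδ.ne', Real.rpow_one]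
    have h1 : m ^ 2 ≤ r ^ δ := by
      rw [← hKδ]
      exact Real.rpow_le_rpow (Real.rpow_nonneg hm2pos.le _) hrK hδ.le
    have h2 : r ^ (m*a) = r ^ δ * r ^ b := by
      rw [← Real.rpow_add hrpos, hδdef]; ring_nf
    rw [h2]
    exact mul_le_mul_of_nonneg_right h1 (Real.rpow_nonneg hrpos.le b)
  calc m ^ 2 * Real.log (maxMod f r) ≤ m ^ 2 * (r ^ b) := by nlinarith
    _ ≤ r ^ (m*a) := hmid
    _ ≤ Real.log (maxMod f (r ^ m)) := hlower.le
end

section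
/- (Boutroux–Cartan) Let b_1, …, b_N ∈ ℂ and h > 0. Then the set of z ∈ ℂ with ∏_{n=1}^N |z − b_n| < (h/e)^N can be covered by at most N open disks whose radii have total sum at most 2h. In particular, with h = R/4, for all z outside a union of disks of total diameter at most R one has ∏_{n=1}^N |z − b_n| ≥ (R/(4e))^N. -/
open scoped Classical

lemma pow_self_le_exp_mul_factorial : ∀ n : ℕ, (n:ℝ)^n ≤ Real.exp 1 ^ n * n.factorial := by
  intro n
  induction n with
  | zero => simp
  | succ n ih =>
    have key : ((n:ℝ)+1)^n ≤ Real.exp 1 * (n:ℝ)^n := by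
      rcases Nat.eq_zero_or_pos n with h0 | h0
      · subst h0; simpa using Real.one_le_exp (by norm_num)
      · have hn : (0:ℝ) < n := by exact_mod_cast h0
        have h1 : ((n:ℝ)+1) ≤ (n:ℝ) * Real.exp (1/n) := by
          have h2 := Real.add_one_le_exp (1/(n:ℝ))
          have h3 : (n:ℝ) * (1/(n:ℝ) + 1) ≤ (n:ℝ) * Real.exp (1/n) :=
            mul_le_mul_of_nonneg_left h2 hn.le
          calc ((n:ℝ)+1) = (n:ℝ) * (1/(n:ℝ) + 1) := by field_simp; ring
            _ ≤ _ := h3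
        calc ((n:ℝ)+1)^n ≤ ((n:ℝ) * Real.exp (1/n))^n :=
              pow_le_pow_left₀ (by positivity) h1 n
          _ = (n:ℝ)^n * Real.exp (1/n)^n := mul_pow _ _ _
          _ = (n:ℝ)^n * Real.exp 1 := by
              rw [← Real.exp_nat_mul]
              congr 2
              field_simp
          _ = Real.exp 1 * (n:ℝ)^n := mul_comm _ _
    have hf : ((n+1:ℕ).factorial : ℝ) = ((n:ℝ)+1) * n.factorial := by
      rw [Nat.factorial_succ]; push_cast; ring
    have hnn : (0:ℝ) ≤ (n:ℝ)+1 := by positivity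
    calc ((n+1:ℕ):ℝ)^(n+1) = ((n:ℝ)+1)^n * ((n:ℝ)+1) := by push_cast; rw [pow_succ]
      _ ≤ (Real.exp 1 * (n:ℝ)^n) * ((n:ℝ)+1) := mul_le_mul_of_nonneg_right key hnn
      _ ≤ (Real.exp 1 * (Real.exp 1 ^ n * n.factorial)) * ((n:ℝ)+1) := by
          have := mul_le_mul_of_nonneg_left ih (Real.exp_pos 1).le
          exact mul_le_mul_of_nonneg_right this hnn
      _ = Real.exp 1 ^ (n+1) * ((n+1:ℕ).factorial : ℝ) := by rw [hf]; ring

lemma cartan_aux (A : ℝ) (hA : 0 < A) : ∀ (n : ℕ) (s : Multiset ℂ), Multiset.card s = n →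
    ∃ L : List (ℂ × ℕ), (∀ q ∈ L, 1 ≤ q.2) ∧ (L.map Prod.snd).sum = n ∧
      ∀ z : ℂ, (∀ q ∈ L, 2 * q.2 * A ≤ dist z q.1) →
        ∀ k : ℕ, 0 < k → Multiset.card (s.filter (fun w => dist z w < k * A)) < k := by
  intro n
  induction n using Nat.strong_induction_on with
  | _ n ih =>
    intro s hs
    rcases Nat.eq_zero_or_pos n with rfl | hn
    · refine ⟨[], by simp, by simp, ?_⟩
      intro z _ k hk
      have h0 : s = 0 := Multiset.card_eq_zero.mp hs
      subst h0
      simpa using hk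
    · obtain ⟨a, ha⟩ : ∃ a, a ∈ s := Multiset.card_pos_iff_exists_mem.mp (hs ▸ hn)
      set T : Set ℕ :=
        {t | 0 < t ∧ ∃ c : ℂ, t ≤ Multiset.card (s.filter fun w => dist c w ≤ t * A)} with hT
      have hT1 : 1 ∈ T := by
        refine ⟨one_pos, a, ?_⟩
        have hmem : a ∈ s.filter (fun w => dist a w ≤ (1:ℕ) * A) :=
          Multiset.mem_filter.mpr ⟨ha, by simp [dist_self]; positivity⟩
        exact Multiset.card_pos_iff_exists_mem.mpr ⟨a, hmem⟩
      have hTbdd : BddAbove T := by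
        refine ⟨n, fun t ht => ?_⟩
        obtain ⟨_, c, hc⟩ := ht
        calc t ≤ Multiset.card (s.filter fun w => dist c w ≤ t * A) := hc
          _ ≤ Multiset.card s := Multiset.card_le_card (Multiset.filter_le _ s)
          _ = n := hs
      set p := sSup T with hp
      obtain ⟨hp0, c, hc⟩ : p ∈ T := Nat.sSup_mem ⟨1, hT1⟩ hTbdd
      have hmax : ∀ t ∈ T, t ≤ p := fun t ht => le_csSup hTbdd ht
      have hpn : p ≤ n := by
        calc p ≤ Multiset.card (s.filter fun w => dist c w ≤ p * A) := hc
          _ ≤ Multiset.card s := Multiset.card_le_card (Multiset.filter_le _ s)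
          _ = n := hs
      set f := s.filter (fun w => dist c w ≤ p * A) with hf
      have hfl : p ≤ f.toList.length := by rw [Multiset.length_toList]; exact hc
      set u : Multiset ℂ := ((f.toList.take p : List ℂ) : Multiset ℂ) with hu
      have hu_card : Multiset.card u = p := by
        rw [hu, Multiset.coe_card, List.length_take]
        exact min_eq_left hfl
      have hu_le_f : u ≤ f := by
        have h1 : (f.toList.take p).Subperm f.toList :=
          (List.take_sublist _ _).subperm
        have h2 : u ≤ (f.toList : Multiset ℂ) := h1
        rwa [Multiset.coe_toList] at h2
      have hu_le : u ≤ s := hu_le_f.trans (Multiset.filter_le _ s)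
      have hu_mem : ∀ w ∈ u, dist c w ≤ p * A := fun w hw =>
        (Multiset.mem_filter.mp (Multiset.mem_of_le hu_le_f hw)).2
      set s' := s - u with hs'def
      have hs'u : s' + u = s := tsub_add_cancel_of_le hu_le
      have hcard' : Multiset.card s' = n - p := by
        have := congrArg Multiset.card hs'u
        rw [Multiset.card_add, hu_card] at this
        omega
      obtain ⟨L', hL1, hL2, hL3⟩ := ih (n - p) (Nat.sub_lt hn hp0) s' hcard'
      refine ⟨(c, p) :: L', ?_, ?_, ?_⟩
      · intro q hq
        rcases List.mem_cons.mp hq with rfl | hq'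
        · exact hp0
        · exact hL1 q hq'
      · simp only [List.map_cons, List.sum_cons, hL2]
        omega
      · intro z hz k hk
        have hz0 : 2 * (p:ℝ) * A ≤ dist z c := hz (c, p) List.mem_cons_self
        have hzL : ∀ q ∈ L', 2 * q.2 * A ≤ dist z q.1 := fun q hq =>
          hz q (List.mem_cons_of_mem _ hq)
        rcases le_or_gt k p with hkp | hpk
        · have hcount' := hL3 z hzL k hk
          have hu0 : (u.filter fun w => dist z w < k * A) = 0 := by
            rw [Multiset.filter_eq_nil]
            intro w hw hwz
            have h1 : dist c w ≤ p * A := hu_mem w hw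
            have h2 := dist_triangle z w c
            have h3 : (k:ℝ) * A ≤ (p:ℝ) * A := by
              have : (k:ℝ) ≤ p := by exact_mod_cast hkp
              exact mul_le_mul_of_nonneg_right this hA.le
            rw [dist_comm w c] at h2
            linarith
          calc Multiset.card (s.filter fun w => dist z w < k * A)
              = Multiset.card ((s' + u).filter fun w => dist z w < k * A) := by rw [hs'u]
            _ = Multiset.card (s'.filter fun w => dist z w < k * A)
                + Multiset.card (u.filter fun w => dist z w < k * A) := by
                rw [Multiset.filter_add, Multiset.card_add]
            _ = Multiset.card (s'.filter fun w => dist z w < k * A) := by rw [hu0]; simp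
            _ < k := hcount'
        · by_contra hcon
          push_neg at hcon
          have hkT : k ∈ T := by
            refine ⟨hk, z, le_trans hcon (Multiset.card_le_card ?_)⟩
            exact Multiset.monotone_filter_right _ (fun w hw => le_of_lt hw)
          exact absurd (hmax k hkT) (not_le.mpr hpk)

lemma cartan_prod_lower (A : ℝ) (hA : 0 < A) (N : ℕ) (ds : Multiset ℝ)
    (hcard : Multiset.card ds = N) (hpos : ∀ x ∈ ds, 0 ≤ x)
    (hcount : ∀ k : ℕ, 0 < k → Multiset.card (ds.filter fun x => x < k * A) < k) :
    (N.factorial : ℝ) * A ^ N ≤ ds.prod := by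
  set l := ds.sort (· ≤ ·) with hl
  have hsort : l.Pairwise (· ≤ ·) := Multiset.pairwise_sort _ _
  have hleq : (l : Multiset ℝ) = ds := Multiset.sort_eq _ _
  have hlen : l.length = N := by
    rw [← hcard, ← hleq, Multiset.coe_card]
  have hget : ∀ i : Fin l.length, ((i:ℕ)+1 : ℝ) * A ≤ l.get i := by
    intro i
    by_contra hcon
    push_neg at hcon
    have htake : ∀ x ∈ l.take ((i:ℕ)+1), x < (((i:ℕ)+1 : ℕ) : ℝ) * A := by
      intro x hx
      obtain ⟨j, hj, hx'⟩ := List.getElem_of_mem hx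
      rw [List.getElem_take] at hx'
      have hji : j ≤ (i:ℕ) := by
        have := hj
        rw [List.length_take] at this
        omega
      have hjl : j < l.length := lt_of_le_of_lt hji i.isLt
      have : l.get ⟨j, hjl⟩ ≤ l.get i := hsort.rel_get_of_le (by exact hji)
      push_cast
      calc x = l.get ⟨j, hjl⟩ := by rw [← hx']; rfl
        _ ≤ l.get i := this
        _ < ((i:ℕ)+1 : ℝ) * A := hcon
    have hle : ((l.take ((i:ℕ)+1) : List ℝ) : Multiset ℝ)
        ≤ ds.filter (fun x => x < (((i:ℕ)+1 : ℕ) : ℝ) * A) := by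
      rw [Multiset.le_filter]
      constructor
      · rw [← hleq]
        exact (List.take_sublist _ _).subperm
      · intro a haa
        exact htake a (by exact_mod_cast haa)
    have hcard2 := Multiset.card_le_card hle
    rw [Multiset.coe_card, List.length_take, min_eq_left (by omega : (i:ℕ)+1 ≤ l.length)]
      at hcard2
    have := hcount ((i:ℕ)+1) (Nat.succ_pos _)
    omega
  have hprod : ds.prod = ∏ i : Fin l.length, l.get i := by
    rw [← hleq, Multiset.prod_coe, ← List.prod_ofFn (f := l.get), List.ofFn_get]
  have hfac : (N.factorial : ℝ) * A ^ N = ∏ i : Fin l.length, (((i:ℕ)+1 : ℝ) * A) := by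
    rw [Finset.prod_mul_distrib, Finset.prod_const, Finset.card_univ, Fintype.card_fin, hlen]
    have h2 : ∏ i : Fin N, ((i:ℕ)+1 : ℝ) = ((N.factorial : ℕ) : ℝ) := by
      rw [← Finset.prod_range_add_one_eq_factorial N]
      push_cast
      rw [Fin.prod_univ_eq_prod_range (fun i => ((i:ℕ)+1 : ℝ))]
    rw [h2]
  rw [hprod, hfac]
  exact Finset.prod_le_prod (fun i _ => by positivity) (fun i _ => hget i)

lemma cartan_sum_getD : ∀ (l : List ℕ) (N : ℕ), l.length ≤ N →
    ∑ i : Fin N, l.getD i 0 = l.sum := by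
  intro l
  induction l with
  | nil => intro N _; simp
  | cons a t ih =>
    intro N hN
    cases N with
    | zero => simp at hN
    | succ M =>
      rw [Fin.sum_univ_succ]
      simp only [Fin.val_zero, List.getD_cons_zero, Fin.val_succ, List.getD_cons_succ,
        List.sum_cons]
      rw [ih M (by simpa using hN)]

lemma cartan_length_le_sum : ∀ l : List ℕ, (∀ x ∈ l, 1 ≤ x) → l.length ≤ l.sum := by
  intro l
  induction l with
  | nil => simp
  | cons a t ih =>
    intro h
    simp only [List.length_cons, List.sum_cons]
    have := ih (fun x hx => h x (List.mem_cons_of_mem _ hx))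
    have := h a List.mem_cons_self
    omega

theorem stmt7 (N : ℕ) (b : Fin N → ℂ) (h : ℝ) (hh : 0 < h) :
    ∃ (c : Fin N → ℂ) (ρ : Fin N → ℝ), (∀ i, 0 ≤ ρ i) ∧ (∑ i, ρ i ≤ 2 * h) ∧
      ∀ z : ℂ, (∏ i, ‖z - b i‖) < (h / Real.exp 1) ^ (N : ℕ) →
        ∃ i, z ∈ Metric.ball (c i) (ρ i) := by
  rcases Nat.eq_zero_or_pos N with rfl | hN
  · exact ⟨fun _ => 0, fun _ => 0, fun i => le_refl _, by simp; positivity, fun z hz => by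
      simp at hz⟩
  · have hNR : (0:ℝ) < N := by exact_mod_cast hN
    set A : ℝ := h / N with hA_def
    have hA : 0 < A := by positivity
    set s : Multiset ℂ := Finset.univ.val.map b with hs_def
    have hs : Multiset.card s = N := by simp [hs_def]
    obtain ⟨L, hL1, hL2, hL3⟩ := cartan_aux A hA N s hs
    have hlen : L.length ≤ N := by
      have h1 : (L.map Prod.snd).length ≤ (L.map Prod.snd).sum :=
        cartan_length_le_sum _ (by
          intro x hx
          obtain ⟨q, hq, rfl⟩ := List.mem_map.mp hx
          exact hL1 q hq)
      rw [List.length_map, hL2] at h1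
      exact h1
    refine ⟨fun i => (L.getD i (0, 0)).1, fun i => 2 * ((L.getD i (0, 0)).2 : ℝ) * A,
      fun i => by positivity, ?_, ?_⟩
    · -- sum of radii
      have hpt : ∀ i : Fin N, (L.getD (i:ℕ) (0, 0)).2 = (L.map Prod.snd).getD (i:ℕ) 0 := by
        intro i
        rcases lt_or_ge (i:ℕ) L.length with hi | hi
        · rw [List.getD_eq_getElem _ _ hi,
            List.getD_eq_getElem _ _ (by simpa using hi), List.getElem_map]
        · rw [List.getD_eq_default _ _ hi, List.getD_eq_default _ _ (by simpa using hi)]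
      have hsum : ∑ i : Fin N, ((L.getD (i:ℕ) (0, 0)).2 : ℕ) = N := by
        calc ∑ i : Fin N, (L.getD (i:ℕ) (0, 0)).2
            = ∑ i : Fin N, (L.map Prod.snd).getD (i:ℕ) 0 := by
              exact Finset.sum_congr rfl (fun i _ => hpt i)
          _ = (L.map Prod.snd).sum := cartan_sum_getD _ N (by simpa using hlen)
          _ = N := hL2
      have : ∑ i : Fin N, 2 * ((L.getD (i:ℕ) (0, 0)).2 : ℝ) * A
          = 2 * A * ((∑ i : Fin N, ((L.getD (i:ℕ) (0, 0)).2 : ℕ) : ℕ) : ℝ) := by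
        rw [Nat.cast_sum, Finset.mul_sum]
        exact Finset.sum_congr rfl (fun i _ => by ring)
      rw [this, hsum, hA_def]
      have heq : 2 * (h / (N:ℝ)) * (N:ℝ) = 2 * h := by field_simp
      exact le_of_eq heq
    · -- covering
      intro z hz
      by_contra hcon
      push_neg at hcon
      have hcon' : ∀ i : Fin N, 2 * ((L.getD (i:ℕ) (0, 0)).2 : ℝ) * A ≤ dist z (L.getD (i:ℕ) (0, 0)).1 := by
        intro i
        have := hcon i
        rw [Metric.mem_ball] at this
        exact not_lt.mp this
      have hzL : ∀ q ∈ L, 2 * (q.2:ℝ) * A ≤ dist z q.1 := by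
        intro q hq
        obtain ⟨j, hj, hq'⟩ := List.getElem_of_mem hq
        have hjN : j < N := lt_of_lt_of_le hj hlen
        have := hcon' ⟨j, hjN⟩
        rwa [List.getD_eq_getElem _ _ (by simpa using hj), hq'] at this
      have hcount := hL3 z hzL
      set ds : Multiset ℝ := s.map (dist z) with hds_def
      have hds_card : Multiset.card ds = N := by rw [hds_def, Multiset.card_map, hs]
      have hds_count : ∀ k : ℕ, 0 < k →
          Multiset.card (ds.filter fun x => x < k * A) < k := by
        intro k hk
        have := hcount k hk
        simpa [hds_def, Multiset.filter_map, Multiset.card_map] using this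
      have hds_pos : ∀ x ∈ ds, (0:ℝ) ≤ x := by
        intro x hx
        obtain ⟨w, _, rfl⟩ := Multiset.mem_map.mp hx
        exact dist_nonneg
      have hlow := cartan_prod_lower A hA N ds hds_card hds_pos hds_count
      have hprod_eq : ds.prod = ∏ i, ‖z - b i‖ := by
        rw [hds_def, hs_def, Multiset.map_map]
        rw [Finset.prod_eq_multiset_prod]
        congr 1
        exact Multiset.map_congr rfl (fun i _ => dist_eq_norm _ _)
      have hkey : (h / Real.exp 1) ^ N ≤ (N.factorial : ℝ) * A ^ N := by
        have h1 := pow_self_le_exp_mul_factorial N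
        have he : (0:ℝ) < Real.exp 1 ^ N := by positivity
        have hNN : (0:ℝ) < (N:ℝ)^N := by positivity
        rw [div_pow, hA_def, div_pow, ← mul_div_assoc, div_le_div_iff₀ he hNN]
        calc h ^ N * (N:ℝ)^N ≤ h ^ N * (Real.exp 1 ^ N * N.factorial) :=
              mul_le_mul_of_nonneg_left h1 (by positivity)
          _ = (N.factorial : ℝ) * h ^ N * Real.exp 1 ^ N := by ring
      rw [hprod_eq] at hlow
      linarith [hz]
end
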